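/- Let S > 0, K > 0, T > 0 and r ∈ ℝ be constants. The function v ↦ S e^{rT} Φ(d₁(v)) − K Φ(d₂(v)), where d₁(v) = (ln(S/K) + (r + v²/2)T)/(v√T) and d₂(v) = d₁(v) − v√T, is monotonically increasing on (0, ∞); that is, the Black–Scholes value of the European call option is an increasing function of the volatility parameter v. -/

import Mathlib

open MeasureTheory

/-- The standard normal cumulative distribution function. -/
noncomputable def stdNormalCDF (x : ℝ) : ℝ :=
  (Real.sqrt (2 * Real.pi))⁻¹ * ∫ u in Set.Iio x, Real.exp (-u ^ 2 / 2)

lemma integrable_gauss : Integrable (fun u : ℝ => Real.exp (-u ^ 2 / 2)) := by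
  have h := integrable_exp_neg_mul_sq (by norm_num : (0:ℝ) < 1/2)
  convert h using 2 with u
  ring_nf

lemma hasDerivAt_stdNormalCDF (x : ℝ) :
    HasDerivAt stdNormalCDF ((Real.sqrt (2 * Real.pi))⁻¹ * Real.exp (-x ^ 2 / 2)) x := by
  set g : ℝ → ℝ := fun u => Real.exp (-u ^ 2 / 2) with hg
  have hcont : Continuous g := by continuity
  have hint : Integrable g := integrable_gauss
  have key : ∀ y : ℝ, stdNormalCDF y =
      (Real.sqrt (2 * Real.pi))⁻¹ * ((∫ u in Set.Iic (0:ℝ), g u) + ∫ u in (0:ℝ)..y, g u) := by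
    intro y
    have h1 : (∫ u in Set.Iio y, g u) = ∫ u in Set.Iic y, g u :=
      setIntegral_congr_set Iio_ae_eq_Iic
    have h2 : (∫ u in Set.Iic y, g u) - ∫ u in Set.Iic (0:ℝ), g u = ∫ u in (0:ℝ)..y, g u :=
      intervalIntegral.integral_Iic_sub_Iic hint.integrableOn hint.integrableOn
    unfold stdNormalCDF
    rw [h1, ← h2]
    ring
  have hderiv : HasDerivAt (fun y => ∫ u in (0:ℝ)..y, g u) (g x) x :=
    intervalIntegral.integral_hasDerivAt_right hint.intervalIntegrable
      (hcont.stronglyMeasurableAtFilter _ _) hcont.continuousAt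
  have := ((hderiv.const_add (∫ u in Set.Iic (0:ℝ), g u)).const_mul
      (Real.sqrt (2 * Real.pi))⁻¹)
  refine HasDerivAt.congr_of_eventuallyEq this ?_
  filter_upwards with y using (key y)

/-- The Black–Scholes value of the European call option,
`v ↦ S e^{rT} Φ(d₁(v)) − K Φ(d₂(v))` with
`d₁(v) = (ln(S/K) + (r + v²/2)T)/(v√T)` and `d₂(v) = d₁(v) − v√T`,
is an increasing function of the volatility parameter `v` on `(0, ∞)`. -/
theorem blackScholes_strictMonoOn_vol
    (S K T r : ℝ) (hS : 0 < S) (hK : 0 < K) (hT : 0 < T) :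
    StrictMonoOn
      (fun v : ℝ =>
        S * Real.exp (r * T)
            * stdNormalCDF ((Real.log (S / K) + (r + v ^ 2 / 2) * T) / (v * Real.sqrt T))
          - K * stdNormalCDF
              ((Real.log (S / K) + (r + v ^ 2 / 2) * T) / (v * Real.sqrt T)
                - v * Real.sqrt T))
      (Set.Ioi 0) := by
  set L := Real.log (S / K) with hL
  set sT := Real.sqrt T with hsT
  have hsT0 : 0 < sT := Real.sqrt_pos.mpr hT
  set c := (Real.sqrt (2 * Real.pi))⁻¹ with hc
  have hc0 : 0 < c := by
    apply inv_pos.mpr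
    exact Real.sqrt_pos.mpr (by positivity)
  set d1 : ℝ → ℝ := fun v => (L + (r + v ^ 2 / 2) * T) / (v * sT) with hd1
  set f : ℝ → ℝ := fun v =>
      S * Real.exp (r * T) * stdNormalCDF (d1 v) - K * stdNormalCDF (d1 v - v * sT) with hf
  -- derivative facts
  have main : ∀ v ∈ Set.Ioi (0:ℝ),
      HasDerivAt f (K * (c * Real.exp (-(d1 v - v * sT) ^ 2 / 2)) * sT) v := by
    intro v hv
    have hv0 : (0:ℝ) < v := hv
    have hvsT : v * sT ≠ 0 := by positivity
    -- derivative of d1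
    have hnum : HasDerivAt (fun v : ℝ => L + (r + v ^ 2 / 2) * T) (v * T) v := by
      have h := ((((hasDerivAt_pow 2 v).div_const 2).const_add r).mul_const T).const_add L
      refine h.congr_deriv ?_
      push_cast
      ring
    have hden : HasDerivAt (fun v : ℝ => v * sT) sT v := by
      simpa using (hasDerivAt_id v).mul_const sT
    have hd1' : HasDerivAt d1
        ((v * T * (v * sT) - (L + (r + v ^ 2 / 2) * T) * sT) / (v * sT) ^ 2) v :=
      hnum.div hden hvsT
    set D := (v * T * (v * sT) - (L + (r + v ^ 2 / 2) * T) * sT) / (v * sT) ^ 2 with hD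
    have hΦ1 : HasDerivAt (fun w => stdNormalCDF (d1 w))
        (c * Real.exp (-(d1 v) ^ 2 / 2) * D) v :=
      (hasDerivAt_stdNormalCDF (d1 v)).comp v hd1'
    have hd2' : HasDerivAt (fun w => d1 w - w * sT) (D - sT) v := hd1'.sub hden
    have hΦ2 : HasDerivAt (fun w => stdNormalCDF (d1 w - w * sT))
        (c * Real.exp (-(d1 v - v * sT) ^ 2 / 2) * (D - sT)) v :=
      HasDerivAt.comp (h₂ := stdNormalCDF) v (hasDerivAt_stdNormalCDF (d1 v - v * sT)) hd2'
    have hftot : HasDerivAt f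
        (S * Real.exp (r * T) * (c * Real.exp (-(d1 v) ^ 2 / 2) * D)
          - K * (c * Real.exp (-(d1 v - v * sT) ^ 2 / 2) * (D - sT))) v :=
      (hΦ1.const_mul _).sub (hΦ2.const_mul _)
    -- key identity: S e^{rT} e^{-d1²/2} = K e^{-d2²/2}
    have hident : S * Real.exp (r * T) * Real.exp (-(d1 v) ^ 2 / 2)
        = K * Real.exp (-(d1 v - v * sT) ^ 2 / 2) := by
      have hd1v : d1 v * (v * sT) = L + (r + v ^ 2 / 2) * T := by
        rw [hd1]; field_simp
      have hsq : sT ^ 2 = T := Real.sq_sqrt hT.le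
      have hdiff : (d1 v) ^ 2 / 2 - (d1 v - v * sT) ^ 2 / 2 = L + r * T := by
        have : (d1 v) ^ 2 / 2 - (d1 v - v * sT) ^ 2 / 2
            = d1 v * (v * sT) - (v * sT) ^ 2 / 2 := by ring
        rw [this, hd1v, mul_pow, hsq]; ring
      have hexpL : Real.exp L = S / K := by rw [hL, Real.exp_log (by positivity)]
      have : Real.exp (-(d1 v) ^ 2 / 2) =
          Real.exp (-(d1 v - v * sT) ^ 2 / 2) * Real.exp (-(L + r * T)) := by
        rw [← Real.exp_add]; congr 1; linarith [hdiff]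
      rw [this]
      have hprod : Real.exp (r * T) * Real.exp (-(L + r * T)) = K / S := by
        rw [← Real.exp_add]
        have h' : r * T + -(L + r * T) = -L := by ring
        rw [h', Real.exp_neg, hexpL]
        field_simp
      calc S * Real.exp (r * T) * (Real.exp (-(d1 v - v * sT) ^ 2 / 2) * Real.exp (-(L + r * T)))
          = S * (Real.exp (r * T) * Real.exp (-(L + r * T)))
              * Real.exp (-(d1 v - v * sT) ^ 2 / 2) := by ring
        _ = S * (K / S) * Real.exp (-(d1 v - v * sT) ^ 2 / 2) := by rw [hprod]
        _ = K * Real.exp (-(d1 v - v * sT) ^ 2 / 2) := by field_simp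
    have : S * Real.exp (r * T) * (c * Real.exp (-(d1 v) ^ 2 / 2) * D)
          - K * (c * Real.exp (-(d1 v - v * sT) ^ 2 / 2) * (D - sT))
        = K * (c * Real.exp (-(d1 v - v * sT) ^ 2 / 2)) * sT := by
      have h2 : S * Real.exp (r * T) * (c * Real.exp (-(d1 v) ^ 2 / 2) * D)
          = K * Real.exp (-(d1 v - v * sT) ^ 2 / 2) * c * D := by
        calc S * Real.exp (r * T) * (c * Real.exp (-(d1 v) ^ 2 / 2) * D)
            = (S * Real.exp (r * T) * Real.exp (-(d1 v) ^ 2 / 2)) * c * D := by ring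
          _ = K * Real.exp (-(d1 v - v * sT) ^ 2 / 2) * c * D := by rw [hident]
      rw [h2]; ring
    rwa [this] at hftot
  apply strictMonoOn_of_deriv_pos (convex_Ioi 0)
  · intro v hv
    exact ((main v hv).continuousAt).continuousWithinAt
  · intro v hv
    rw [interior_Ioi] at hv
    rw [(main v hv).deriv]
    have : 0 < Real.exp (-(d1 v - v * sT) ^ 2 / 2) := Real.exp_pos _
    positivity
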